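/- Let c ∈ (0,1) and ℓ ≥ 1. There exists a constant y = y(c,ℓ) ∈ (c,1) such that the following holds for every protocol family {(g_n^[0], g_n^[1])}_{n} with sample size ℓ satisfying g_n^[0](0) = 0: for every sufficiently large n, every source opinion z ∈ {0,1}, every t, and every state x ≤ c·n, Pr(X_{t+1} ≤ y·n | X_t = x) ≥ 1 − exp(−2·n^{1/2}). -/

import Mathlib

open MeasureTheory ProbabilityTheory
open scoped ENNReal

/-- `P_b(p)`: probability that an agent with opinion `b` adopts opinion 1, when the current
proportion of 1-opinions is `p`; it is the expectation of `g(K)` for `K ~ Binomial(ℓ, p)`. -/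
noncomputable def sampleProb (ℓ : ℕ) (g : ℕ → ℝ) (p : ℝ) : ℝ :=
  ∑ k ∈ Finset.range (ℓ + 1), (ℓ.choose k : ℝ) * p ^ k * (1 - p) ^ (ℓ - k) * g k

/-- Probability that a `Binomial(m, q)` random variable equals `k`. -/
noncomputable def binomProb (m : ℕ) (q : ℝ) (k : ℕ) : ℝ :=
  (m.choose k : ℝ) * q ^ k * (1 - q) ^ (m - k)

/-- One-step transition probability of the configuration chain: conditionally on `X_t = x`,
`X_{t+1} = z + B₁ + B₀` with independent `B₁ ~ Binomial(x - z, P₁(x/n))` and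
`B₀ ~ Binomial(n - x - (1 - z), P₀(x/n))`. -/
noncomputable def transProb (n ℓ : ℕ) (g0 g1 : ℕ → ℝ) (z x y : ℕ) : ℝ :=
  ∑ j ∈ Finset.range (n + 1),
    if z + j ≤ y then
      binomProb (x - z) (sampleProb ℓ g1 ((x : ℝ) / n)) j *
        binomProb (n - x - (1 - z)) (sampleProb ℓ g0 ((x : ℝ) / n)) (y - z - j)
    else 0

/-- A protocol with sample size `ℓ` has update probabilities in `[0,1]`. -/
def ValidProtocol (ℓ : ℕ) (g0 g1 : ℕ → ℝ) : Prop :=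
  ∀ k ≤ ℓ, (0 ≤ g0 k ∧ g0 k ≤ 1) ∧ (0 ≤ g1 k ∧ g1 k ≤ 1)

/-- `(X_t)` is (a version of) the time-homogeneous configuration Markov chain of the
bit-dissemination protocol `(g0, g1)` with `n` agents, sample size `ℓ` and source opinion `z`:
conditionally on the whole past, the law of `X_{t+1}` is given by `transProb` applied to the
current state. -/
def IsBDChain (n ℓ : ℕ) (g0 g1 : ℕ → ℝ) (z : ℕ) {Ω : Type*} [MeasurableSpace Ω]
    (μ : Measure Ω) (X : ℕ → Ω → ℕ) : Prop :=
  (∀ t, Measurable (X t)) ∧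
    ∀ (t : ℕ) (x : ℕ → ℕ) (y : ℕ), μ {ω | ∀ s ≤ t, X s ω = x s} ≠ 0 →
      ProbabilityTheory.cond μ {ω | ∀ s ≤ t, X s ω = x s} {ω | X (t + 1) ω = y} =
        ENNReal.ofReal (transProb n ℓ g0 g1 z (x t) y)

/-- The convergence time `τ = inf {t : ∀ s ≥ t, X_s = n·z}`, with value `∞` if no such `t`
exists. -/
noncomputable def convTime (n z : ℕ) {Ω : Type*} (X : ℕ → Ω → ℕ) (ω : Ω) : ℝ≥0∞ :=
  sInf {r : ℝ≥0∞ | ∃ t : ℕ, r = t ∧ ∀ s, t ≤ s → X s ω = n * z}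

/-- The characteristic function `F_n(p) = -p + p·P₁(p) + (1-p)·P₀(p)`. -/
noncomputable def charF (ℓ : ℕ) (g0 g1 : ℕ → ℝ) (p : ℝ) : ℝ :=
  -p + p * sampleProb ℓ g1 p + (1 - p) * sampleProb ℓ g0 p



section Aux

lemma binomProb_nonneg {m : ℕ} {q : ℝ} (hq0 : 0 ≤ q) (hq1 : q ≤ 1) (k : ℕ) :
    0 ≤ binomProb m q k := by
  have h1 : (0:ℝ) ≤ 1 - q := by linarith
  unfold binomProb
  positivity

lemma sum_binomProb_mul_pow_le (m : ℕ) {q r : ℝ} (hq0 : 0 ≤ q) (hq1 : q ≤ 1) (hr : 1 ≤ r)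
    (K : ℕ) :
    ∑ k ∈ Finset.range K, binomProb m q k * r ^ k ≤ (1 + q * (r - 1)) ^ m := by
  have hf : ∀ k, 0 ≤ binomProb m q k * r ^ k := fun k =>
    mul_nonneg (binomProb_nonneg hq0 hq1 k) (pow_nonneg (by linarith) k)
  have key : ∑ k ∈ Finset.range (m+1), binomProb m q k * r ^ k = (1 + q * (r - 1)) ^ m := by
    rw [show (1 + q * (r - 1)) = q * r + (1 - q) by ring, add_pow]
    refine Finset.sum_congr rfl fun k _ => ?_
    unfold binomProb; ring
  calc ∑ k ∈ Finset.range K, binomProb m q k * r ^ k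
      ≤ ∑ k ∈ Finset.range (max K (m+1)), binomProb m q k * r ^ k :=
        Finset.sum_le_sum_of_subset_of_nonneg
          (Finset.range_subset_range.2 (le_max_left _ _)) (fun k _ _ => hf k)
    _ = ∑ k ∈ Finset.range (m+1), binomProb m q k * r ^ k := by
        refine (Finset.sum_subset (Finset.range_subset_range.2 (le_max_right _ _)) ?_).symm
        intro k _ hk
        have : m < k := by simpa using hk
        simp [binomProb, Nat.choose_eq_zero_of_lt this]
    _ = (1 + q * (r - 1)) ^ m := key

lemma sum_binomial_weights (ℓ : ℕ) (p : ℝ) :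
    ∑ k ∈ Finset.range (ℓ + 1), (ℓ.choose k : ℝ) * p ^ k * (1 - p) ^ (ℓ - k) = 1 := by
  have h : ∑ k ∈ Finset.range (ℓ + 1), (ℓ.choose k : ℝ) * p ^ k * (1 - p) ^ (ℓ - k)
      = (p + (1 - p)) ^ ℓ := by
    rw [add_pow]
    exact Finset.sum_congr rfl fun k _ => by ring
  rw [h]; norm_num

lemma sampleProb_nonneg {ℓ : ℕ} {g : ℕ → ℝ} {p : ℝ} (hp0 : 0 ≤ p) (hp1 : p ≤ 1)
    (hg : ∀ k ≤ ℓ, 0 ≤ g k) : 0 ≤ sampleProb ℓ g p := by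
  refine Finset.sum_nonneg fun k hk => ?_
  have hk' : k ≤ ℓ := Nat.lt_succ_iff.mp (Finset.mem_range.mp hk)
  have h1p : (0:ℝ) ≤ 1 - p := by linarith
  have := hg k hk'
  positivity

lemma sampleProb_le_one {ℓ : ℕ} {g : ℕ → ℝ} {p : ℝ} (hp0 : 0 ≤ p) (hp1 : p ≤ 1)
    (hg : ∀ k ≤ ℓ, g k ≤ 1) : sampleProb ℓ g p ≤ 1 := by
  rw [← sum_binomial_weights ℓ p]
  refine Finset.sum_le_sum fun k hk => ?_
  have hk' : k ≤ ℓ := Nat.lt_succ_iff.mp (Finset.mem_range.mp hk)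
  have h1p : (0:ℝ) ≤ 1 - p := by linarith
  have ht : (0:ℝ) ≤ (ℓ.choose k : ℝ) * p ^ k * (1 - p) ^ (ℓ - k) := by positivity
  calc (ℓ.choose k : ℝ) * p ^ k * (1 - p) ^ (ℓ - k) * g k
      ≤ (ℓ.choose k : ℝ) * p ^ k * (1 - p) ^ (ℓ - k) * 1 :=
        mul_le_mul_of_nonneg_left (hg k hk') ht
    _ = _ := mul_one _

lemma sampleProb_le_of_g0 {ℓ : ℕ} {g : ℕ → ℝ} {p : ℝ} (hp0 : 0 ≤ p) (hp1 : p ≤ 1)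
    (hg : ∀ k ≤ ℓ, g k ≤ 1) (hg0 : g 0 = 0) : sampleProb ℓ g p ≤ 1 - (1 - p) ^ ℓ := by
  have h1p : (0:ℝ) ≤ 1 - p := by linarith
  have e1 : sampleProb ℓ g p
      = ∑ k ∈ Finset.range ℓ, (ℓ.choose (k+1) : ℝ) * p ^ (k+1) * (1 - p) ^ (ℓ - (k+1)) * g (k+1) := by
    unfold sampleProb
    rw [Finset.sum_range_succ']
    simp [hg0]
  have e2 : ∑ k ∈ Finset.range ℓ, (ℓ.choose (k+1) : ℝ) * p ^ (k+1) * (1 - p) ^ (ℓ - (k+1))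
      = 1 - (1 - p) ^ ℓ := by
    have := sum_binomial_weights ℓ p
    rw [Finset.sum_range_succ'] at this
    simp at this
    linarith
  rw [e1, ← e2]
  refine Finset.sum_le_sum fun k hk => ?_
  have hk' : k + 1 ≤ ℓ := Finset.mem_range.mp hk
  have ht : (0:ℝ) ≤ (ℓ.choose (k+1) : ℝ) * p ^ (k+1) * (1 - p) ^ (ℓ - (k+1)) := by positivity
  calc (ℓ.choose (k+1) : ℝ) * p ^ (k+1) * (1 - p) ^ (ℓ - (k+1)) * g (k+1)
      ≤ (ℓ.choose (k+1) : ℝ) * p ^ (k+1) * (1 - p) ^ (ℓ - (k+1)) * 1 :=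
        mul_le_mul_of_nonneg_left (hg (k+1) hk') ht
    _ = _ := mul_one _

lemma sum_ite_shift {M : Type*} [AddCommMonoid M] (G : ℕ → M) (ms N : ℕ) :
    ∑ y' ∈ Finset.range N, (if ms ≤ y' then G (y' - ms) else 0)
      = ∑ k ∈ Finset.range (N - ms), G k := by
  rw [← Finset.sum_filter]
  have h : (Finset.range N).filter (fun y' => ms ≤ y') = Finset.Ico ms N := by
    ext a; simp [Finset.mem_Ico, and_comm]
  rw [h, Finset.sum_Ico_eq_sum_range]
  exact Finset.sum_congr rfl fun k _ => by simp

lemma tail_le (n ℓ : ℕ) (g0 g1 : ℕ → ℝ) (z x N : ℕ) (Y r : ℝ) (hr : 1 ≤ r)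
    (hq00 : 0 ≤ sampleProb ℓ g0 ((x:ℝ)/n)) (hq01 : sampleProb ℓ g0 ((x:ℝ)/n) ≤ 1)
    (hq10 : 0 ≤ sampleProb ℓ g1 ((x:ℝ)/n)) (hq11 : sampleProb ℓ g1 ((x:ℝ)/n) ≤ 1) :
    ∑ y' ∈ Finset.range N, (if Y < (y':ℝ) then transProb n ℓ g0 g1 z x y' else 0)
      ≤ r ^ ((z:ℝ) - Y) * ((1 + sampleProb ℓ g1 ((x:ℝ)/n) * (r-1)) ^ (x - z)
          * (1 + sampleProb ℓ g0 ((x:ℝ)/n) * (r-1)) ^ (n - x - (1 - z))) := by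
  set q1 := sampleProb ℓ g1 ((x:ℝ)/n) with hq1def
  set q0 := sampleProb ℓ g0 ((x:ℝ)/n) with hq0def
  set m1 := x - z
  set m0 := n - x - (1 - z)
  have hr0 : (0:ℝ) < r := lt_of_lt_of_le one_pos hr
  have hrY : (0:ℝ) ≤ r ^ ((z:ℝ) - Y) := (Real.rpow_pos_of_pos hr0 _).le
  have hb1 : ∀ j, 0 ≤ binomProb m1 q1 j * r ^ j := fun j =>
    mul_nonneg (binomProb_nonneg hq10 hq11 j) (pow_nonneg hr0.le j)
  have hb0 : ∀ k, 0 ≤ binomProb m0 q0 k * r ^ k := fun k =>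
    mul_nonneg (binomProb_nonneg hq00 hq01 k) (pow_nonneg hr0.le k)
  -- termwise bound
  have step1 : ∀ y' ∈ Finset.range N,
      (if Y < (y':ℝ) then transProb n ℓ g0 g1 z x y' else 0)
        ≤ ∑ j ∈ Finset.range (n + 1),
            (if z + j ≤ y' then
              r ^ ((z:ℝ) - Y) * ((binomProb m1 q1 j * r ^ j) *
                (binomProb m0 q0 (y' - z - j) * r ^ (y' - z - j))) else 0) := by
    intro y' _
    by_cases hY : Y < (y':ℝ)
    · rw [if_pos hY]
      unfold transProb
      refine Finset.sum_le_sum fun j _ => ?_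
      by_cases hj : z + j ≤ y'
      · rw [if_pos hj, if_pos hj]
        set k := y' - z - j with hk
        have hyk : z + j + k = y' := by omega
        have hcast : ((z:ℝ) - Y) + (j:ℝ) + (k:ℝ) = (y':ℝ) - Y := by
          have : ((z:ℝ)) + (j:ℝ) + (k:ℝ) = (y':ℝ) := by exact_mod_cast congrArg (Nat.cast : ℕ → ℝ) hyk
          linarith
        have h1 : (1:ℝ) ≤ r ^ ((y':ℝ) - Y) := by
          apply Real.one_le_rpow hr; linarith
        have hprod : r ^ ((y':ℝ) - Y) = r ^ ((z:ℝ) - Y) * r ^ j * r ^ k := by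
          rw [← hcast, Real.rpow_add hr0, Real.rpow_add hr0, Real.rpow_natCast, Real.rpow_natCast]
        have hbb : 0 ≤ binomProb m1 q1 j * binomProb m0 q0 k :=
          mul_nonneg (binomProb_nonneg hq10 hq11 j) (binomProb_nonneg hq00 hq01 k)
        calc binomProb m1 q1 j * binomProb m0 q0 k
            = binomProb m1 q1 j * binomProb m0 q0 k * 1 := (mul_one _).symm
          _ ≤ binomProb m1 q1 j * binomProb m0 q0 k * r ^ ((y':ℝ) - Y) :=
              mul_le_mul_of_nonneg_left h1 hbb
          _ = r ^ ((z:ℝ) - Y) * ((binomProb m1 q1 j * r ^ j) *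
                (binomProb m0 q0 k * r ^ k)) := by rw [hprod]; ring
      · rw [if_neg hj, if_neg hj]
    · rw [if_neg hY]
      refine Finset.sum_nonneg fun j _ => ?_
      by_cases hj : z + j ≤ y'
      · rw [if_pos hj]
        exact mul_nonneg hrY (mul_nonneg (hb1 j) (hb0 _))
      · rw [if_neg hj]
  refine le_trans (Finset.sum_le_sum step1) ?_
  rw [Finset.sum_comm]
  have step2 : ∀ j ∈ Finset.range (n + 1),
      ∑ y' ∈ Finset.range N,
          (if z + j ≤ y' then
            r ^ ((z:ℝ) - Y) * ((binomProb m1 q1 j * r ^ j) *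
              (binomProb m0 q0 (y' - z - j) * r ^ (y' - z - j))) else 0)
        ≤ (r ^ ((z:ℝ) - Y) * (1 + q0 * (r-1)) ^ m0) * (binomProb m1 q1 j * r ^ j) := by
    intro j _
    have hrw : ∀ y' : ℕ,
        (if z + j ≤ y' then
            r ^ ((z:ℝ) - Y) * ((binomProb m1 q1 j * r ^ j) *
              (binomProb m0 q0 (y' - z - j) * r ^ (y' - z - j))) else 0)
        = (if z + j ≤ y' then
            (r ^ ((z:ℝ) - Y) * (binomProb m1 q1 j * r ^ j)) *
              (binomProb m0 q0 (y' - (z + j)) * r ^ (y' - (z + j))) else 0) := by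
      intro y'
      by_cases hj : z + j ≤ y'
      · rw [if_pos hj, if_pos hj, Nat.sub_sub]; ring
      · rw [if_neg hj, if_neg hj]
    simp only [hrw]
    rw [sum_ite_shift (fun k => (r ^ ((z:ℝ) - Y) * (binomProb m1 q1 j * r ^ j)) *
          (binomProb m0 q0 k * r ^ k)) (z + j) N, ← Finset.mul_sum]
    have hc : 0 ≤ r ^ ((z:ℝ) - Y) * (binomProb m1 q1 j * r ^ j) :=
      mul_nonneg hrY (hb1 j)
    calc r ^ ((z:ℝ) - Y) * (binomProb m1 q1 j * r ^ j) *
          (∑ k ∈ Finset.range (N - (z + j)), binomProb m0 q0 k * r ^ k)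
        ≤ r ^ ((z:ℝ) - Y) * (binomProb m1 q1 j * r ^ j) * ((1 + q0 * (r-1)) ^ m0) :=
          mul_le_mul_of_nonneg_left (sum_binomProb_mul_pow_le m0 hq00 hq01 hr _) hc
      _ = (r ^ ((z:ℝ) - Y) * (1 + q0 * (r-1)) ^ m0) * (binomProb m1 q1 j * r ^ j) := by ring
  refine le_trans (Finset.sum_le_sum step2) ?_
  rw [← Finset.mul_sum]
  have hc0 : (0:ℝ) ≤ 1 + q0 * (r - 1) := by nlinarith
  have hc : 0 ≤ r ^ ((z:ℝ) - Y) * (1 + q0 * (r-1)) ^ m0 :=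
    mul_nonneg hrY (pow_nonneg hc0 m0)
  calc r ^ ((z:ℝ) - Y) * (1 + q0 * (r-1)) ^ m0 *
        (∑ j ∈ Finset.range (n+1), binomProb m1 q1 j * r ^ j)
      ≤ r ^ ((z:ℝ) - Y) * (1 + q0 * (r-1)) ^ m0 * ((1 + q1 * (r-1)) ^ m1) :=
        mul_le_mul_of_nonneg_left (sum_binomProb_mul_pow_le m1 hq10 hq11 hr _) hc
    _ = r ^ ((z:ℝ) - Y) * ((1 + q1 * (r-1)) ^ m1 * (1 + q0 * (r-1)) ^ m0) := by ring

-- transProb is zero beyond n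
lemma transProb_eq_zero {n ℓ : ℕ} {g0 g1 : ℕ → ℝ} {z x y' : ℕ} (hx : x ≤ n) (hz : z ≤ 1)
    (hy : n + 2 ≤ y') : transProb n ℓ g0 g1 z x y' = 0 := by
  unfold transProb
  refine Finset.sum_eq_zero fun j _ => ?_
  by_cases hj : z + j ≤ y'
  · rw [if_pos hj]
    by_cases hjm : j ≤ x - z
    · have hk : (n - x - (1 - z)) < y' - z - j := by omega
      simp [binomProb, Nat.choose_eq_zero_of_lt hk]
    · have hij : x - z < j := by omega
      simp [binomProb, Nat.choose_eq_zero_of_lt hij]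
  · rw [if_neg hj]

lemma transProb_nonneg {n ℓ : ℕ} {g0 g1 : ℕ → ℝ} {z x y' : ℕ}
    (hq00 : 0 ≤ sampleProb ℓ g0 ((x:ℝ)/n)) (hq01 : sampleProb ℓ g0 ((x:ℝ)/n) ≤ 1)
    (hq10 : 0 ≤ sampleProb ℓ g1 ((x:ℝ)/n)) (hq11 : sampleProb ℓ g1 ((x:ℝ)/n) ≤ 1) :
    0 ≤ transProb n ℓ g0 g1 z x y' := by
  refine Finset.sum_nonneg fun j _ => ?_
  by_cases hj : z + j ≤ y'
  · rw [if_pos hj]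
    exact mul_nonneg (binomProb_nonneg hq10 hq11 j) (binomProb_nonneg hq00 hq01 _)
  · rw [if_neg hj]


variable {Ω : Type} [MeasurableSpace Ω] (μ : Measure Ω) [IsProbabilityMeasure μ]
  (X : ℕ → Ω → ℕ)

-- per-trajectory bound
lemma traj_bound (n ℓ : ℕ) (g0 g1 : ℕ → ℝ) (z : ℕ)
    (hchain : IsBDChain n ℓ g0 g1 z μ X) (hz : z ≤ 1) (t : ℕ) (x : ℕ) (hxn : x ≤ n)
    (hq00 : 0 ≤ sampleProb ℓ g0 ((x:ℝ)/n)) (hq01 : sampleProb ℓ g0 ((x:ℝ)/n) ≤ 1)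
    (hq10 : 0 ≤ sampleProb ℓ g1 ((x:ℝ)/n)) (hq11 : sampleProb ℓ g1 ((x:ℝ)/n) ≤ 1)
    (yv : ℝ)
    (hsum : ∑ y' ∈ Finset.range (n+2),
        (if yv * n < (y':ℝ) then transProb n ℓ g0 g1 z x y' else 0)
      ≤ Real.exp (-2 * (n : ℝ) ^ ((1:ℝ)/2)))
    (w : ℕ → ℕ) (hwt : w t = x) :
    μ ({ω | ∀ s ≤ t, X s ω = w s} ∩ {ω | ¬ ((X (t+1) ω : ℝ) ≤ yv * n)})
      ≤ ENNReal.ofReal (Real.exp (-2 * (n : ℝ) ^ ((1:ℝ)/2)))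
        * μ {ω | ∀ s ≤ t, X s ω = w s} := by
  set C : Set Ω := {ω | ∀ s ≤ t, X s ω = w s} with hC
  have hCmeas : MeasurableSet C := by
    have : C = ⋂ (s : ℕ) (_ : s ≤ t), (X s) ⁻¹' {w s} := by
      ext ω; simp [hC, Set.mem_iInter]
    rw [this]
    exact MeasurableSet.iInter fun s => MeasurableSet.iInter fun _ =>
      (hchain.1 s) (measurableSet_singleton _)
  by_cases hC0 : μ C = 0
  · refine le_trans (measure_mono Set.inter_subset_left) ?_
    rw [hC0]; exact zero_le
  · have hcond := hchain.2 t w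
    have hmeq : ∀ y' : ℕ, μ (C ∩ {ω | X (t+1) ω = y'})
        = μ C * ENNReal.ofReal (transProb n ℓ g0 g1 z x y') := by
      intro y'
      have h1 := cond_apply hCmeas μ {ω | X (t+1) ω = y'}
      have h2 := hcond y' hC0
      rw [hwt] at h2
      rw [h2] at h1
      calc μ (C ∩ {ω | X (t+1) ω = y'})
          = μ C * ((μ C)⁻¹ * μ (C ∩ {ω | X (t+1) ω = y'})) := by
            rw [← mul_assoc, ENNReal.mul_inv_cancel hC0 (measure_ne_top μ C), one_mul]
        _ = μ C * ENNReal.ofReal (transProb n ℓ g0 g1 z x y') := by rw [← h1]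
    have hsubset : C ∩ {ω | ¬ ((X (t+1) ω : ℝ) ≤ yv * n)}
        ⊆ ⋃ y' : ℕ, (if yv * n < (y':ℝ) then C ∩ {ω | X (t+1) ω = y'} else ∅) := by
      intro ω hω
      refine Set.mem_iUnion.2 ⟨X (t+1) ω, ?_⟩
      have : yv * n < ((X (t+1) ω : ℕ) : ℝ) := lt_of_not_ge hω.2
      rw [if_pos this]
      exact ⟨hω.1, rfl⟩
    calc μ (C ∩ {ω | ¬ ((X (t+1) ω : ℝ) ≤ yv * n)})
        ≤ μ (⋃ y' : ℕ, (if yv * n < (y':ℝ) then C ∩ {ω | X (t+1) ω = y'} else ∅)) :=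
          measure_mono hsubset
      _ ≤ ∑' y' : ℕ, μ (if yv * n < (y':ℝ) then C ∩ {ω | X (t+1) ω = y'} else ∅) :=
          measure_iUnion_le _
      _ = ∑' y' : ℕ, μ C * (if yv * n < (y':ℝ)
            then ENNReal.ofReal (transProb n ℓ g0 g1 z x y') else 0) := by
          refine tsum_congr fun y' => ?_
          by_cases h : yv * n < (y':ℝ)
          · rw [if_pos h, if_pos h, hmeq y']
          · rw [if_neg h, if_neg h, measure_empty, mul_zero]
      _ = μ C * ∑' y' : ℕ, (if yv * n < (y':ℝ)
            then ENNReal.ofReal (transProb n ℓ g0 g1 z x y') else 0) := ENNReal.tsum_mul_left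
      _ ≤ μ C * ENNReal.ofReal (Real.exp (-2 * (n : ℝ) ^ ((1:ℝ)/2))) := by
          refine mul_le_mul_of_nonneg_left ?_ zero_le
          have htsum : ∑' y' : ℕ, (if yv * n < (y':ℝ)
              then ENNReal.ofReal (transProb n ℓ g0 g1 z x y') else 0)
            = ∑ y' ∈ Finset.range (n+2), (if yv * n < (y':ℝ)
              then ENNReal.ofReal (transProb n ℓ g0 g1 z x y') else 0) := by
            refine tsum_eq_sum fun y' hy' => ?_
            have hy : n + 2 ≤ y' := by simpa using hy'
            rw [transProb_eq_zero hxn hz hy]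
            simp
          rw [htsum]
          have heq : ∀ y' ∈ Finset.range (n+2), (if yv * n < (y':ℝ)
              then ENNReal.ofReal (transProb n ℓ g0 g1 z x y') else 0)
            = ENNReal.ofReal (if yv * n < (y':ℝ) then transProb n ℓ g0 g1 z x y' else 0) := by
            intro y' _
            by_cases h : yv * n < (y':ℝ)
            · rw [if_pos h, if_pos h]
            · rw [if_neg h, if_neg h, ENNReal.ofReal_zero]
          rw [Finset.sum_congr rfl heq, ← ENNReal.ofReal_sum_of_nonneg]
          · exact ENNReal.ofReal_le_ofReal hsum
          · intro y' _
            by_cases h : yv * n < (y':ℝ)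
            · rw [if_pos h]; exact transProb_nonneg hq00 hq01 hq10 hq11
            · rw [if_neg h]
      _ = _ := mul_comm _ _



lemma arith_key (a g u L : ℝ) (ha0 : 0 < a) (hga : a < g) (hg1 : g ≤ 1)
    (hueq : u * (2 * (a + 1)) = g - a) (hu0 : 0 < u) (hLlow : u / (1 + u) ≤ L) :
    u * (g - a) / 3 ≤ g * L - a * u := by
  have hgau : 0 ≤ g - a := by linarith
  have hua : 0 ≤ u * a := mul_nonneg hu0.le ha0.le
  have huh : u ≤ 1 / 2 := by nlinarith
  have hau : a * u ≤ (g - a) / 2 := by nlinarith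
  have h3 : (u * (g - a) / 3 + a * u) * (1 + u) ≤ g * u := by
    nlinarith [mul_le_mul_of_nonneg_right hau hu0.le,
      mul_nonneg (by linarith : (0:ℝ) ≤ 1/2 - u) (mul_nonneg hu0.le hgau)]
  have h4 : u * (g - a) / 3 + a * u ≤ g * (u / (1 + u)) := by
    rw [mul_div_assoc', le_div_iff₀ (by linarith : (0:ℝ) < 1 + u)]
    linarith
  have h1 : g * (u / (1 + u)) ≤ g * L :=
    mul_le_mul_of_nonneg_left hLlow (by linarith)
  linarith

lemma arith_exp (c L lq κ gg aa u yy z x m1 m0 n : ℝ)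
    (hL0 : 0 < L) (hlq0 : 0 ≤ lq) (hlqL : lq ≤ L) (hlqau : (1 - c) * lq ≤ aa * u)
    (hkey : κ ≤ gg * L - aa * u) (hyy : yy = c + gg)
    (hz : z ≤ 1) (hx : x ≤ c * n) (hn0 : 0 < n)
    (hm1 : m1 ≤ x) (hm0 : m0 ≤ n - x) :
    (z - yy * n) * L + (m1 * L + m0 * lq) ≤ L - κ * n := by
  subst hyy
  nlinarith [mul_le_mul_of_nonneg_right hm1 hL0.le,
    mul_le_mul_of_nonneg_right hm0 hlq0,
    mul_le_mul_of_nonneg_right hx (sub_nonneg.2 hlqL),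
    mul_le_mul_of_nonneg_left hlqau hn0.le,
    mul_le_mul_of_nonneg_right hkey hn0.le,
    mul_le_mul_of_nonneg_right hz hL0.le]

lemma arith_sqrt (κ L n : ℝ) (hκ0 : 0 < κ) (hL0 : 0 < L) (hn0 : 0 < n)
    (hN16 : 16 / κ ^ 2 ≤ n) (hNL : 2 * L / κ ≤ n) :
    L - κ * n ≤ -2 * n ^ ((1:ℝ) / 2) := by
  rw [← Real.sqrt_eq_rpow]
  set s := Real.sqrt n with hs
  have hs2 : s ^ 2 = n := Real.sq_sqrt hn0.le
  have hs0 : 0 ≤ s := Real.sqrt_nonneg n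
  have hκ2 : (0:ℝ) < κ ^ 2 := by positivity
  have h16 : 16 ≤ s ^ 2 * κ ^ 2 := by
    rw [div_le_iff₀ hκ2] at hN16
    nlinarith [hN16, hs2]
  have hsκ : 4 ≤ s * κ := by
    nlinarith [h16, mul_nonneg hs0 hκ0.le]
  have h1 : 2 * s ≤ κ * n / 2 := by
    nlinarith [mul_le_mul_of_nonneg_left hsκ hs0, hs2]
  have h2 : L ≤ κ * n / 2 := by
    rw [div_le_iff₀ hκ0] at hNL
    linarith
  linarith

set_option maxHeartbeats 1000000 in
lemma main_real (c : ℝ) (hc0 : 0 < c) (hc1 : c < 1) (ℓ : ℕ) (hℓ : 1 ≤ ℓ) :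
    ∃ y : ℝ, c < y ∧ y < 1 ∧ ∃ N : ℕ, 1 ≤ N ∧
      ∀ g0 g1 : ℕ → ℝ, ValidProtocol ℓ g0 g1 → g0 0 = 0 →
      ∀ n, N ≤ n → ∀ z ≤ 1, ∀ x : ℕ, (x:ℝ) ≤ c * n →
        ∑ y' ∈ Finset.range (n+2),
            (if y * n < (y':ℝ) then transProb n ℓ g0 g1 z x y' else 0)
          ≤ Real.exp (-2 * (n:ℝ) ^ ((1:ℝ)/2)) := by
  have h1c : (0:ℝ) < 1 - c := by linarith
  obtain ⟨qs, hqsdef⟩ : ∃ qs : ℝ, qs = 1 - (1 - c) ^ ℓ := ⟨_, rfl⟩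
  have hpow1 : (1 - c) ^ ℓ < 1 := pow_lt_one₀ h1c.le (by linarith) (by omega)
  have hpow0 : (0:ℝ) < (1 - c) ^ ℓ := pow_pos h1c ℓ
  have hqs0 : 0 < qs := by rw [hqsdef]; linarith
  have hqs1 : qs < 1 := by rw [hqsdef]; linarith
  obtain ⟨a, hadef⟩ : ∃ a : ℝ, a = (1 - c) * qs := ⟨_, rfl⟩
  have ha0 : 0 < a := hadef ▸ mul_pos h1c hqs0
  have hac : a < 1 - c := by
    rw [hadef]; nlinarith
  obtain ⟨yy, hyydef⟩ : ∃ yy : ℝ, yy = (1 + c + a) / 2 := ⟨_, rfl⟩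
  have hyc : c < yy := by rw [hyydef]; linarith
  have hy1 : yy < 1 := by rw [hyydef]; linarith
  obtain ⟨g, hgdef⟩ : ∃ g : ℝ, g = yy - c := ⟨_, rfl⟩
  have hga : a < g := by rw [hgdef, hyydef]; linarith
  have hg0 : 0 < g := lt_trans ha0 hga
  have hg1 : g ≤ 1 := by rw [hgdef]; linarith
  obtain ⟨u, hudef⟩ : ∃ u : ℝ, u = (g - a) / (2 * (a + 1)) := ⟨_, rfl⟩
  have hu0 : 0 < u := hudef ▸ div_pos (by linarith) (by linarith)
  have hueq : u * (2 * (a + 1)) = g - a := by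
    rw [hudef]; field_simp
  obtain ⟨r, hrdef⟩ : ∃ r : ℝ, r = 1 + u := ⟨_, rfl⟩
  have hr1 : 1 < r := by rw [hrdef]; linarith
  have hr0 : (0:ℝ) < r := by linarith
  obtain ⟨L, hLdef⟩ : ∃ L : ℝ, L = Real.log r := ⟨_, rfl⟩
  have hL0 : 0 < L := hLdef ▸ Real.log_pos hr1
  obtain ⟨κ, hκdef⟩ : ∃ κ : ℝ, κ = u * (g - a) / 3 := ⟨_, rfl⟩
  have hκ0 : 0 < κ := by
    have : 0 < u * (g - a) := mul_pos hu0 (by linarith)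
    rw [hκdef]; linarith
  have hLlow : u / (1 + u) ≤ L := by
    have h := Real.log_le_sub_one_of_pos (show (0:ℝ) < 1 / r by positivity)
    rw [Real.log_div one_ne_zero (ne_of_gt hr0), Real.log_one] at h
    have h2 : 1 - 1 / r ≤ L := by rw [hLdef]; linarith
    have hrinv : 1 - 1 / r = u / (1 + u) := by
      rw [hrdef]; field_simp; ring
    linarith [hrinv ▸ h2]
  have hkey : κ ≤ g * L - a * u := hκdef ▸ arith_key a g u L ha0 hga hg1 hueq hu0 hLlow
  refine ⟨yy, hyc, hy1, ⌈16 / κ ^ 2⌉₊ + ⌈2 * L / κ⌉₊ + 1, by omega, ?_⟩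
  intro g0 g1 hvalid hg00 n hn z hz x hx
  have hn1 : 1 ≤ n := by omega
  have hn0 : (0:ℝ) < n := by exact_mod_cast hn1
  have hN16 : 16 / κ ^ 2 ≤ (n:ℝ) := by
    refine le_trans (Nat.le_ceil _) ?_
    exact_mod_cast le_trans (by omega : ⌈16 / κ ^ 2⌉₊ ≤ ⌈16 / κ ^ 2⌉₊ + ⌈2 * L / κ⌉₊ + 1) hn
  have hNL : 2 * L / κ ≤ (n:ℝ) := by
    refine le_trans (Nat.le_ceil _) ?_
    exact_mod_cast le_trans (by omega : ⌈2 * L / κ⌉₊ ≤ ⌈16 / κ ^ 2⌉₊ + ⌈2 * L / κ⌉₊ + 1) hn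
  -- basic facts about x, p
  have hxn : (x:ℝ) < n := by
    have : c * n < 1 * n := mul_lt_mul_of_pos_right hc1 hn0
    linarith
  have hxnn : x ≤ n := by exact_mod_cast hxn.le
  set p : ℝ := (x:ℝ) / n with hpdef
  have hp0 : 0 ≤ p := by positivity
  have hpc : p ≤ c := by rw [hpdef, div_le_iff₀ hn0]; linarith
  have hp1 : p ≤ 1 := le_trans hpc hc1.le
  set q1 : ℝ := sampleProb ℓ g1 p with hq1def
  set q0 : ℝ := sampleProb ℓ g0 p with hq0def
  have hq10 : 0 ≤ q1 := sampleProb_nonneg hp0 hp1 (fun k hk => ((hvalid k hk).2).1)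
  have hq11 : q1 ≤ 1 := sampleProb_le_one hp0 hp1 (fun k hk => ((hvalid k hk).2).2)
  have hq00 : 0 ≤ q0 := sampleProb_nonneg hp0 hp1 (fun k hk => ((hvalid k hk).1).1)
  have hq01 : q0 ≤ 1 := sampleProb_le_one hp0 hp1 (fun k hk => ((hvalid k hk).1).2)
  have hq0qs : q0 ≤ qs := by
    refine le_trans (sampleProb_le_of_g0 hp0 hp1 (fun k hk => ((hvalid k hk).1).2) hg00) ?_
    have : (1 - c) ^ ℓ ≤ (1 - p) ^ ℓ := pow_le_pow_left₀ h1c.le (by linarith) ℓ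
    rw [hqsdef]; linarith
  -- apply the tail bound
  have htail := tail_le n ℓ g0 g1 z x (n+2) (yy * n) r hr1.le hq00 hq01 hq10 hq11
  rw [← hq0def, ← hq1def] at htail
  set m1 := x - z with hm1def
  set m0 := n - x - (1 - z) with hm0def
  obtain ⟨lq, hlqdef⟩ : ∃ lq : ℝ, lq = Real.log (1 + qs * u) := ⟨_, rfl⟩
  have hqsu0 : 0 ≤ qs * u := by positivity
  have hlq0 : 0 ≤ lq := hlqdef ▸ Real.log_nonneg (by linarith)
  have hqsur : 1 + qs * u ≤ r := by
    have : qs * u ≤ 1 * u := mul_le_mul_of_nonneg_right hqs1.le hu0.le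
    rw [hrdef]; linarith
  have hlqL : lq ≤ L := by
    rw [hlqdef, hLdef]
    exact Real.log_le_log (by linarith) hqsur
  have hlqu : lq ≤ qs * u := by
    have := Real.log_le_sub_one_of_pos (show (0:ℝ) < 1 + qs * u by linarith)
    rw [hlqdef]; linarith
  -- convert the RHS of htail to exponentials
  have hre : r = Real.exp L := by rw [hLdef, Real.exp_log hr0]
  have hru : r - 1 = u := by rw [hrdef]; ring
  have hterm1 : r ^ ((z:ℝ) - yy * n) = Real.exp (((z:ℝ) - yy * n) * L) := by
    rw [Real.rpow_def_of_pos hr0, ← hLdef, mul_comm]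
  have hq1u0 : (0:ℝ) ≤ 1 + q1 * (r - 1) := by
    rw [hru]; positivity
  have hq0u0 : (0:ℝ) ≤ 1 + q0 * (r - 1) := by
    rw [hru]; positivity
  have hterm2 : (1 + q1 * (r - 1)) ^ m1 ≤ Real.exp ((m1:ℝ) * L) := by
    have hb : 1 + q1 * (r - 1) ≤ r := by
      have : q1 * u ≤ 1 * u := mul_le_mul_of_nonneg_right hq11 hu0.le
      rw [hru, hrdef]; linarith
    calc (1 + q1 * (r - 1)) ^ m1 ≤ r ^ m1 := pow_le_pow_left₀ hq1u0 hb m1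
      _ = Real.exp ((m1:ℝ) * L) := by rw [hre, ← Real.exp_nat_mul]
  have hterm3 : (1 + q0 * (r - 1)) ^ m0 ≤ Real.exp ((m0:ℝ) * lq) := by
    have hb : 1 + q0 * (r - 1) ≤ 1 + qs * u := by
      have : q0 * u ≤ qs * u := mul_le_mul_of_nonneg_right hq0qs hu0.le
      rw [hru]; linarith
    calc (1 + q0 * (r - 1)) ^ m0 ≤ (1 + qs * u) ^ m0 := pow_le_pow_left₀ hq0u0 hb m0
      _ = Real.exp ((m0:ℝ) * lq) := by
          rw [hlqdef, ← Real.exp_log (show (0:ℝ) < 1 + qs * u by linarith),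
            ← Real.exp_nat_mul, Real.log_exp]
  have hprod : r ^ ((z:ℝ) - yy * n) * ((1 + q1 * (r-1)) ^ m1 * (1 + q0 * (r-1)) ^ m0)
      ≤ Real.exp (((z:ℝ) - yy * n) * L + ((m1:ℝ) * L + (m0:ℝ) * lq)) := by
    rw [Real.exp_add, Real.exp_add, hterm1]
    refine mul_le_mul_of_nonneg_left ?_ (Real.exp_nonneg _)
    exact mul_le_mul hterm2 hterm3 (pow_nonneg hq0u0 m0) (Real.exp_nonneg _)
  -- bound the exponent
  have hm1x : (m1:ℝ) ≤ (x:ℝ) := by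
    have h : m1 ≤ x := by omega
    exact_mod_cast h
  have hm0x : (m0:ℝ) ≤ (n:ℝ) - (x:ℝ) := by
    have h1 : m0 ≤ n - x := by omega
    have h2 : ((n - x : ℕ) : ℝ) = (n:ℝ) - x := Nat.cast_sub hxnn
    calc (m0:ℝ) ≤ ((n - x : ℕ):ℝ) := by exact_mod_cast h1
      _ = (n:ℝ) - x := h2
  have hz1 : (z:ℝ) ≤ 1 := by exact_mod_cast hz
  have hlqau : (1 - c) * lq ≤ a * u := by
    have h1 : (1 - c) * lq ≤ (1 - c) * (qs * u) := mul_le_mul_of_nonneg_left hlqu h1c.le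
    have h2 : (1 - c) * (qs * u) = a * u := by rw [hadef]; ring
    linarith
  have hyyg : yy = c + g := by rw [hgdef]; ring
  have hexp : ((z:ℝ) - yy * n) * L + ((m1:ℝ) * L + (m0:ℝ) * lq) ≤ L - κ * n :=
    arith_exp c L lq κ g a u yy (z:ℝ) (x:ℝ) (m1:ℝ) (m0:ℝ) (n:ℝ)
      hL0 hlq0 hlqL hlqau hkey hyyg hz1 hx hn0 hm1x hm0x
  have hfinal : L - κ * n ≤ -2 * (n:ℝ) ^ ((1:ℝ)/2) :=
    arith_sqrt κ L (n:ℝ) hκ0 hL0 hn0 hN16 hNL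
  calc ∑ y' ∈ Finset.range (n+2), (if yy * n < (y':ℝ) then transProb n ℓ g0 g1 z x y' else 0)
      ≤ r ^ ((z:ℝ) - yy * n) * ((1 + q1 * (r-1)) ^ m1 * (1 + q0 * (r-1)) ^ m0) := htail
    _ ≤ Real.exp (((z:ℝ) - yy * n) * L + ((m1:ℝ) * L + (m0:ℝ) * lq)) := hprod
    _ ≤ Real.exp (L - κ * n) := Real.exp_le_exp.mpr hexp
    _ ≤ Real.exp (-2 * (n:ℝ) ^ ((1:ℝ)/2)) := Real.exp_le_exp.mpr hfinal

def extTraj (t : ℕ) (v : Fin (t+1) → ℕ) : ℕ → ℕ := fun s => if h : s < t + 1 then v ⟨s, h⟩ else 0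

lemma extTraj_eq (t : ℕ) (v : Fin (t+1) → ℕ) (s : ℕ) (h : s < t + 1) :
    extTraj t v s = v ⟨s, h⟩ := dif_pos h


/-- for `c ∈ (0,1)` and `ℓ ≥ 1` there is a constant `y = y(c,ℓ) ∈ (c,1)` such
that for every protocol family with sample size `ℓ` satisfying `g_n⁰(0) = 0`, for every
sufficiently large `n`, every source opinion `z ∈ {0,1}`, every `t` and every state
`x ≤ c·n`, `Pr(X_{t+1} ≤ y·n | X_t = x) ≥ 1 - exp(-2·n^{1/2})`. -/
theorem stmt_4 (c : ℝ) (hc0 : 0 < c) (hc1 : c < 1) (ℓ : ℕ) (hℓ : 1 ≤ ℓ) :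
    ∃ y : ℝ, c < y ∧ y < 1 ∧
      ∀ g0 g1 : ℕ → ℕ → ℝ, (∀ n : ℕ, ValidProtocol ℓ (g0 n) (g1 n)) →
        (∀ n : ℕ, g0 n 0 = 0) →
        ∃ N : ℕ, ∀ n : ℕ, N ≤ n → ∀ z : ℕ, z ≤ 1 →
          ∀ (Ω : Type) [MeasurableSpace Ω] (μ : Measure Ω) [IsProbabilityMeasure μ]
            (X : ℕ → Ω → ℕ), IsBDChain n ℓ (g0 n) (g1 n) z μ X →
              ∀ (t : ℕ) (x : ℕ), (x : ℝ) ≤ c * n → μ {ω | X t ω = x} ≠ 0 →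
                1 - ENNReal.ofReal (Real.exp (-2 * (n : ℝ) ^ ((1 : ℝ) / 2))) ≤
                  ProbabilityTheory.cond μ {ω | X t ω = x}
                    {ω | (X (t + 1) ω : ℝ) ≤ y * n} := by
  obtain ⟨y, hyc, hy1, N, hN1, hmain⟩ := main_real c hc0 hc1 ℓ hℓ
  refine ⟨y, hyc, hy1, ?_⟩
  intro g0 g1 hvalid hg00
  refine ⟨N, ?_⟩
  intro n hn z hz Ω _ μ _ X hchain t x hx hμx
  have hn1 : 1 ≤ n := le_trans hN1 hn
  have hn0 : (0:ℝ) < n := by exact_mod_cast hn1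
  have hxn : (x:ℝ) < n := by
    have : c * n < 1 * n := mul_lt_mul_of_pos_right hc1 hn0
    linarith
  have hxnn : x ≤ n := by exact_mod_cast hxn.le
  have hp0 : (0:ℝ) ≤ (x:ℝ)/n := by positivity
  have hp1 : (x:ℝ)/n ≤ 1 := by rw [div_le_one hn0]; linarith
  have hq00 := sampleProb_nonneg hp0 hp1 (fun k hk => ((hvalid n k hk).1).1)
  have hq01 := sampleProb_le_one hp0 hp1 (fun k hk => ((hvalid n k hk).1).2)
  have hq10 := sampleProb_nonneg hp0 hp1 (fun k hk => ((hvalid n k hk).2).1)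
  have hq11 := sampleProb_le_one hp0 hp1 (fun k hk => ((hvalid n k hk).2).2)
  have hsum := hmain (g0 n) (g1 n) (hvalid n) (hg00 n) n hn z hz x hx
  set e := ENNReal.ofReal (Real.exp (-2 * (n:ℝ) ^ ((1:ℝ)/2))) with hedef
  set A := {ω : Ω | X t ω = x} with hAdef
  set B := {ω : Ω | (X (t+1) ω : ℝ) ≤ y * n} with hBdef
  set Bc := {ω : Ω | ¬ ((X (t+1) ω : ℝ) ≤ y * n)} with hBcdef
  have hAmeas : MeasurableSet A := (hchain.1 t) (measurableSet_singleton x)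
  have hBmeas : MeasurableSet B := by
    have hBpre : B = X (t+1) ⁻¹' {m : ℕ | (m:ℝ) ≤ y * n} := rfl
    rw [hBpre]
    exact (hchain.1 (t+1)) ((Set.to_countable _).measurableSet)
  have hBc : A \ B = A ∩ Bc := by
    rw [Set.diff_eq]
    congr 1
  -- trajectory decomposition
  let D : (Fin (t+1) → ℕ) → Set Ω := fun v =>
    if v ⟨t, Nat.lt_succ_self t⟩ = x then {ω | ∀ s ≤ t, X s ω = extTraj t v s} else ∅
  have hextv : ∀ v : Fin (t+1) → ℕ, ∀ s : ℕ, (h : s < t + 1) → extTraj t v s = v ⟨s, h⟩ :=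
    extTraj_eq t
  have hAeq : A = ⋃ v, D v := by
    ext ω
    constructor
    · intro hω
      refine Set.mem_iUnion.2 ⟨fun s => X s ω, ?_⟩
      have hvt : (fun s : Fin (t+1) => X s ω) ⟨t, Nat.lt_succ_self t⟩ = x := hω
      simp only [D, if_pos hvt]
      intro s hs
      rw [hextv _ s (Nat.lt_succ_of_le hs)]
    · intro hω
      obtain ⟨v, hv⟩ := Set.mem_iUnion.1 hω
      simp only [D] at hv
      by_cases hvt : v ⟨t, Nat.lt_succ_self t⟩ = x
      · rw [if_pos hvt] at hv
        have := hv t le_rfl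
        rw [hextv _ t (Nat.lt_succ_self t)] at this
        show X t ω = x
        rw [this, hvt]
      · rw [if_neg hvt] at hv
        exact absurd hv (Set.notMem_empty ω)
  have hDmeas : ∀ v, MeasurableSet (D v) := by
    intro v
    simp only [D]
    split
    · have : {ω | ∀ s ≤ t, X s ω = extTraj t v s}
          = ⋂ (s : ℕ) (_ : s ≤ t), (X s) ⁻¹' {extTraj t v s} := by
        ext ω; simp
      rw [this]
      exact MeasurableSet.iInter fun s => MeasurableSet.iInter fun _ =>
        (hchain.1 s) (measurableSet_singleton _)
    · exact MeasurableSet.empty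
  have hdisj : Pairwise (Function.onFun Disjoint D) := by
    intro v v' hne
    rw [Function.onFun, Set.disjoint_left]
    intro ω hv hv'
    simp only [D] at hv hv'
    by_cases h1 : v ⟨t, Nat.lt_succ_self t⟩ = x
    · by_cases h2 : v' ⟨t, Nat.lt_succ_self t⟩ = x
      · rw [if_pos h1] at hv
        rw [if_pos h2] at hv'
        apply hne
        funext i
        have e1 := hv i.val (Nat.lt_succ_iff.1 i.isLt)
        have e2 := hv' i.val (Nat.lt_succ_iff.1 i.isLt)
        rw [hextv v i.val i.isLt, Fin.eta] at e1
        rw [hextv v' i.val i.isLt, Fin.eta] at e2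
        exact e1.symm.trans e2
      · rw [if_neg h2] at hv'
        exact absurd hv' (Set.notMem_empty ω)
    · rw [if_neg h1] at hv
      exact absurd hv (Set.notMem_empty ω)
  have hDbound : ∀ v, μ (D v ∩ Bc) ≤ e * μ (D v) := by
    intro v
    simp only [D]
    split
    case isTrue h =>
      refine traj_bound μ X n ℓ (g0 n) (g1 n) z hchain hz t x hxnn
        hq00 hq01 hq10 hq11 y hsum (extTraj t v) ?_
      rw [hextv v t (Nat.lt_succ_self t), h]
    case isFalse h =>
      simp
  -- combine
  have hbound : μ (A ∩ Bc) ≤ e * μ A := by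
    have hsub : A ∩ Bc ⊆ ⋃ v, (D v ∩ Bc) := by
      rw [hAeq, Set.iUnion_inter]
    calc μ (A ∩ Bc) ≤ μ (⋃ v, (D v ∩ Bc)) := measure_mono hsub
      _ ≤ ∑' v, μ (D v ∩ Bc) := measure_iUnion_le _
      _ ≤ ∑' v, e * μ (D v) := ENNReal.tsum_le_tsum hDbound
      _ = e * ∑' v, μ (D v) := ENNReal.tsum_mul_left
      _ = e * μ (⋃ v, D v) := by rw [measure_iUnion hdisj hDmeas]
      _ = e * μ A := by rw [← hAeq]
  have hμAfin : μ A ≠ ⊤ := measure_ne_top μ A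
  have hsplit : μ (A ∩ B) + μ (A \ B) = μ A := measure_inter_add_diff A hBmeas
  have key : (1 - e) * μ A ≤ μ (A ∩ B) := by
    have h1 : (1 - e) * μ A = μ A - e * μ A := by
      rw [ENNReal.sub_mul (fun _ _ => hμAfin), one_mul]
    rw [h1]
    have h2 : μ A - e * μ A ≤ μ A - μ (A \ B) := by
      refine tsub_le_tsub_left ?_ _
      rw [hBc]
      exact hbound
    refine le_trans h2 ?_
    rw [← hsplit, ENNReal.add_sub_cancel_right (measure_ne_top μ _)]
  rw [cond_apply hAmeas]
  rw [show (μ A)⁻¹ * μ (A ∩ B) = μ (A ∩ B) / μ A by rw [mul_comm, div_eq_mul_inv]]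
  exact (ENNReal.le_div_iff_mul_le (Or.inl hμx) (Or.inl hμAfin)).2 key
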